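/- The polynomial Q = y⁴ − 2·x·y²·z + x²·z² − y·z³ ∈ ℂ[x,y,z] is homogeneous of degree 4 and is irreducible in ℂ[x,y,z]. -/

import Mathlib

open MvPolynomial

/-- The quartic `Q = y⁴ − 2·x·y²·z + x²·z² − y·z³` in `ℂ[x,y,z]`,
with variables `x = X 0`, `y = X 1`, `z = X 2`. -/
noncomputable def Qpoly : MvPolynomial (Fin 3) ℂ :=
  X 1 ^ 4 - 2 * X 0 * X 1 ^ 2 * X 2 + X 0 ^ 2 * X 2 ^ 2 - X 1 * X 2 ^ 3

section Aux

local notation "Y" => (X 0 : MvPolynomial (Fin 2) ℂ)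
local notation "Z" => (X 1 : MvPolynomial (Fin 2) ℂ)

private lemma primeX0 {n : ℕ} : Prime (X 0 : MvPolynomial (Fin (n+1)) ℂ) := by
  rw [← MulEquiv.prime_iff (finSuccEquiv ℂ n).toMulEquiv]
  simpa [finSuccEquiv_X_zero] using Polynomial.prime_X

private lemma primeY : Prime Y := primeX0

private lemma primeZ : Prime Z := by
  have h := (MulEquiv.prime_iff (renameEquiv ℂ (Equiv.swap (0:Fin 2) 1)).toMulEquiv).mpr primeX0
  simpa using h

private lemma Y_not_dvd_Z : ¬ (Y ∣ Z) := by
  rintro ⟨c, hc⟩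
  have := congrArg (MvPolynomial.eval fun i => if i = 0 then (0:ℂ) else 1) hc
  simp at this

private lemma Z_not_dvd_Y : ¬ (Z ∣ Y) := by
  rintro ⟨c, hc⟩
  have := congrArg (MvPolynomial.eval fun i => if i = 1 then (0:ℂ) else 1) hc
  simp at this

private lemma Qimage : (finSuccEquiv ℂ 2) Qpoly =
    Polynomial.C (Z^2) * Polynomial.X ^ 2 + Polynomial.C (-(2*Y^2*Z)) * Polynomial.X
      + Polynomial.C (Y^4 - Y*Z^3) := by
  have h1 : (1 : Fin 3) = (0 : Fin 2).succ := rfl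
  have h2 : (2 : Fin 3) = (1 : Fin 2).succ := rfl
  simp only [Qpoly, map_sub, map_add, map_mul, map_pow, map_ofNat, h1, h2,
    finSuccEquiv_X_zero, finSuccEquiv_X_succ]
  simp [map_ofNat]
  ring

private lemma irred_image : Irreducible ((finSuccEquiv ℂ 2) Qpoly) := by
  rw [Qimage]
  have hZ2 : (Z^2) ≠ 0 := pow_ne_zero _ (MvPolynomial.X_ne_zero 1)
  have hdeg := Polynomial.degree_quadratic hZ2 (b := -(2*Y^2*Z)) (c := Y^4 - Y*Z^3)
  have c0 : (Polynomial.C (Z^2) * Polynomial.X ^ 2 + Polynomial.C (-(2*Y^2*Z)) * Polynomial.X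
      + Polynomial.C (Y^4 - Y*Z^3)).coeff 0 = Y^4 - Y*Z^3 := by
    simp only [Polynomial.coeff_add, Polynomial.coeff_C_mul, Polynomial.coeff_X_pow,
      Polynomial.coeff_X_zero, Polynomial.coeff_C_zero]
    norm_num
  have c1 : (Polynomial.C (Z^2) * Polynomial.X ^ 2 + Polynomial.C (-(2*Y^2*Z)) * Polynomial.X
      + Polynomial.C (Y^4 - Y*Z^3)).coeff 1 = -(2*Y^2*Z) := by
    simp only [Polynomial.coeff_add, Polynomial.coeff_C_mul, Polynomial.coeff_X_pow,
      Polynomial.coeff_X_one, Polynomial.coeff_C]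
    norm_num
  have c2 : (Polynomial.C (Z^2) * Polynomial.X ^ 2 + Polynomial.C (-(2*Y^2*Z)) * Polynomial.X
      + Polynomial.C (Y^4 - Y*Z^3)).coeff 2 = Z^2 := by
    simp only [Polynomial.coeff_add, Polynomial.coeff_C_mul, Polynomial.coeff_X_pow,
      Polynomial.coeff_X, Polynomial.coeff_C]
    norm_num
  apply Polynomial.irreducible_of_eisenstein_criterion
    (P := Ideal.span {Y})
    ((Ideal.span_singleton_prime (MvPolynomial.X_ne_zero 0)).2 primeY)
  · rw [Polynomial.leadingCoeff_quadratic hZ2]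
    rw [Ideal.mem_span_singleton]
    intro h
    exact Y_not_dvd_Z (primeY.dvd_of_dvd_pow h)
  · intro n hn
    rw [hdeg] at hn
    have hn2 : n < 2 := by exact_mod_cast hn
    rw [Ideal.mem_span_singleton]
    interval_cases n
    · rw [c0]
      exact ⟨Y^3 - Z^3, by ring⟩
    · rw [c1]
      exact ⟨-(2*Y*Z), by ring⟩
  · rw [hdeg]; norm_num
  · rw [Ideal.span_singleton_pow, Ideal.mem_span_singleton, c0]
    rintro ⟨q, hq⟩
    rw [pow_two] at hq
    have hq' : Y * Z^3 = Y * (Y * (Y^2 - q)) := by linear_combination -hq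
    have h3 : Z^3 = Y * (Y^2 - q) :=
      mul_left_cancel₀ (MvPolynomial.X_ne_zero 0) hq'
    exact Y_not_dvd_Z (primeY.dvd_of_dvd_pow ⟨_, h3⟩)
  · intro r hr
    obtain ⟨g, hg⟩ := hr
    have hc2 : r ∣ Z^2 := by
      have := congrArg (fun p => Polynomial.coeff p 2) hg
      simp only [Polynomial.coeff_C_mul] at this
      rw [c2] at this
      exact ⟨g.coeff 2, this⟩
    have hc0 : r ∣ Y^4 - Y*Z^3 := by
      have := congrArg (fun p => Polynomial.coeff p 0) hg
      simp only [Polynomial.coeff_C_mul] at this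
      rw [c0] at this
      exact ⟨g.coeff 0, this⟩
    by_contra hru
    have hr0 : r ≠ 0 := by
      rintro rfl
      rw [zero_dvd_iff] at hc2
      exact hZ2 hc2
    obtain ⟨p, hp, hpr⟩ := WfDvdMonoid.exists_irreducible_factor hru hr0
    have hpp : Prime p := UniqueFactorizationMonoid.irreducible_iff_prime.mp hp
    have hpZ : p ∣ Z := by
      have : p ∣ Z * Z := by
        have := hpr.trans hc2
        simpa [sq] using this
      rcases hpp.2.2 _ _ this with h | h <;> exact h
    have hZr : Z ∣ r :=
      (hp.associated_of_dvd primeZ.irreducible hpZ).symm.dvd.trans hpr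
    have hZY : Z ∣ Y := by
      have h1 : Z ∣ Y^4 - Y*Z^3 := hZr.trans hc0
      have h2 : Z ∣ Y*Z^3 := ⟨Y*Z^2, by ring⟩
      have h4 : Z ∣ Y^4 := by
        have := dvd_add h1 h2
        simpa using this
      exact primeZ.dvd_of_dvd_pow h4
    exact Z_not_dvd_Y hZY

end Aux

theorem stmt_12 : Qpoly.IsHomogeneous 4 ∧ Irreducible Qpoly := by
  constructor
  · have hx := isHomogeneous_X ℂ (0 : Fin 3)
    have hy := isHomogeneous_X ℂ (1 : Fin 3)
    have hz := isHomogeneous_X ℂ (2 : Fin 3)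
    have h2 : (2 : MvPolynomial (Fin 3) ℂ).IsHomogeneous 0 := by
      simpa only [map_ofNat] using isHomogeneous_C (Fin 3) (2 : ℂ)
    have t1 : ((X 1 : MvPolynomial (Fin 3) ℂ) ^ 4).IsHomogeneous 4 := by
      simpa using hy.pow 4
    have t2 : ((2 : MvPolynomial (Fin 3) ℂ) * X 0 * X 1 ^ 2 * X 2).IsHomogeneous 4 := by
      simpa using ((h2.mul hx).mul (hy.pow 2)).mul hz
    have t3 : ((X 0 : MvPolynomial (Fin 3) ℂ) ^ 2 * X 2 ^ 2).IsHomogeneous 4 := by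
      simpa using (hx.pow 2).mul (hz.pow 2)
    have t4 : ((X 1 : MvPolynomial (Fin 3) ℂ) * X 2 ^ 3).IsHomogeneous 4 := by
      simpa using hy.mul (hz.pow 3)
    exact ((t1.sub t2).add t3).sub t4
  · rw [← MulEquiv.irreducible_iff (finSuccEquiv ℂ 2)]
    exact irred_image
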